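/- Let S be a real symmetric positive definite n×n matrix and let ℓ > 0 be a real number. Consider the function f(V) = trace(V S) − ℓ · log det V defined on real symmetric positive definite n×n matrices V. Then f attains its unique global minimum at V* = ℓ S^{-1}; that is, f(V) ≥ f(ℓ S^{-1}) for every symmetric positive definite V, with equality if and only if V = ℓ S^{-1}. -/

import Mathlib

open Matrix

private lemma wishart_scalar_ineq {l t : ℝ} (hl : 0 < l) (ht : 0 < t) :
    l - l * Real.log l ≤ t - l * Real.log t := by
  have h := Real.log_le_sub_one_of_pos (div_pos ht hl)
  rw [Real.log_div ht.ne' hl.ne'] at h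
  have h2 : l * (t / l - 1) = t - l := by field_simp
  have h' : l * Real.log t - l * Real.log l ≤ t - l := by
    have := mul_le_mul_of_nonneg_left h hl.le
    rw [h2] at this
    linarith [this, mul_sub l (Real.log t) (Real.log l)]
  linarith

private lemma wishart_scalar_eq {l t : ℝ} (hl : 0 < l) (ht : 0 < t)
    (h : l - l * Real.log l = t - l * Real.log t) : t = l := by
  by_contra hne
  have h1 : t / l ≠ 1 := by
    intro hc
    exact hne ((div_eq_one_iff_eq hl.ne').1 hc)
  have h2 := Real.log_lt_sub_one_of_pos (div_pos ht hl) h1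
  rw [Real.log_div ht.ne' hl.ne'] at h2
  have h3 : l * (t / l - 1) = t - l := by field_simp
  have h' : l * Real.log t - l * Real.log l < t - l := by
    have := (mul_lt_mul_iff_right₀ hl).2 h2
    rw [h3] at this
    linarith [this, mul_sub l (Real.log t) (Real.log l)]
  linarith

open scoped MatrixOrder in
private lemma wishart_exists_sqrt {n : ℕ} {S : Matrix (Fin n) (Fin n) ℝ} (hS : S.PosSemidef) :
    ∃ R : Matrix (Fin n) (Fin n) ℝ, R.PosSemidef ∧ R * R = S :=
  ⟨CFC.sqrt S, (CFC.sqrt_nonneg S).posSemidef, CFC.sqrt_mul_sqrt_self S hS.nonneg⟩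

/-- the unconstrained minimizer of the Wishart negative log-likelihood.
For a symmetric positive definite matrix `S` and `ℓ > 0`, the function
`V ↦ trace (V * S) - ℓ * log (det V)` over symmetric positive definite matrices `V`
attains its unique global minimum at `V = ℓ • S⁻¹`. -/
theorem wishart_loglikelihood_minimizer
    {n : ℕ}
    (S : Matrix (Fin n) (Fin n) ℝ) (hS : S.PosDef)
    (l : ℝ) (hl : 0 < l) :
    ∀ V : Matrix (Fin n) (Fin n) ℝ, V.PosDef →
      ((l • S⁻¹ * S).trace - l * Real.log (l • S⁻¹).det ≤
          (V * S).trace - l * Real.log V.det ∧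
        ((V * S).trace - l * Real.log V.det =
            (l • S⁻¹ * S).trace - l * Real.log (l • S⁻¹).det ↔ V = l • S⁻¹)) := by
  classical
  intro V hV
  -- square root of S
  obtain ⟨R, hRps, hRR⟩ := wishart_exists_sqrt hS.posSemidef
  have hRH : Rᴴ = R := hRps.isHermitian
  have hdetS : 0 < S.det := hS.det_pos
  have hdetV : 0 < V.det := hV.det_pos
  have hdetRR : S.det = R.det * R.det := by rw [← hRR, det_mul]
  have hdetR : R.det ≠ 0 := by
    intro h
    rw [hdetRR, h, mul_zero] at hdetS
    exact lt_irrefl _ hdetS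
  have hRunit : IsUnit R := (isUnit_iff_isUnit_det R).2 hdetR.isUnit
  -- the conjugated matrix A = R * V * R
  set A := R * V * R with hAdef
  have hAH : A.IsHermitian := by
    rw [hAdef, Matrix.IsHermitian, conjTranspose_mul, conjTranspose_mul, hRH, hV.1.eq, mul_assoc]
  have hA : A.PosDef := by
    refine posDef_iff_dotProduct_mulVec.mpr ⟨hAH, fun x hx => ?_⟩
    have hy : R *ᵥ x ≠ 0 := by
      intro h
      apply hx
      have hinj := Matrix.mulVec_injective_iff_isUnit.mpr hRunit
      have : R *ᵥ x = R *ᵥ 0 := by simpa using h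
      exact hinj this
    have key : star x ⬝ᵥ (A *ᵥ x) = star (R *ᵥ x) ⬝ᵥ (V *ᵥ (R *ᵥ x)) := by
      rw [hAdef, mul_assoc, ← mulVec_mulVec, dotProduct_mulVec, ← mulVec_mulVec]
      congr 1
      rw [star_mulVec, hRH]
    rw [key]
    exact hV.dotProduct_mulVec_pos hy
  -- trace and det of A
  have htr : A.trace = (V * S).trace := by
    rw [hAdef, mul_assoc, trace_mul_comm R (V * R), mul_assoc, hRR]
  have hdetA : A.det = S.det * V.det := by
    rw [hAdef, det_mul, det_mul, hdetRR]; ring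
  have hdetApos : 0 < A.det := by rw [hdetA]; positivity
  -- eigenvalues of A
  set μ := hAH.eigenvalues with hμdef
  have hμpos : ∀ i, 0 < μ i := fun i => hA.eigenvalues_pos i
  have hdet_eig : A.det = ∏ i, μ i := by
    have := hAH.det_eq_prod_eigenvalues
    simpa using this
  have htr_eig : A.trace = ∑ i, μ i := by
    nth_rewrite 1 [hAH.spectral_theorem, Unitary.conjStarAlgAut_apply]
    rw [trace_mul_comm, ← mul_assoc]
    rw [show (star (hAH.eigenvectorUnitary : Matrix (Fin n) (Fin n) ℝ)) *
        (hAH.eigenvectorUnitary : Matrix (Fin n) (Fin n) ℝ) = 1 from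
      Matrix.mem_unitaryGroup_iff'.mp (hAH.eigenvectorUnitary).2, one_mul]
    simp [trace_diagonal, hμdef]
  -- values at the minimizer
  have hSinv : S⁻¹ * S = 1 := Matrix.nonsing_inv_mul S hdetS.ne'.isUnit
  have htr_min : (l • S⁻¹ * S).trace = n * l := by
    rw [smul_mul_assoc, hSinv, trace_smul, trace_one]
    simp [mul_comm]
  have hdet_min : (l • S⁻¹).det = l ^ n * S.det⁻¹ := by
    rw [det_smul, det_nonsing_inv]
    simp
  have hlog_min : Real.log (l • S⁻¹).det = n * Real.log l - Real.log S.det := by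
    rw [hdet_min, Real.log_mul (by positivity) (by positivity), Real.log_pow,
      Real.log_inv]
    ring
  -- the log of det V
  have hlogV : Real.log V.det = (∑ i, Real.log (μ i)) - Real.log S.det := by
    have hdV : V.det = A.det / S.det := by
      rw [hdetA]; field_simp
    rw [hdV, Real.log_div hdetApos.ne' hdetS.ne', hdet_eig,
      Real.log_prod (fun i _ => (hμpos i).ne')]
  -- pointwise inequality and its sum
  have hsum_le : ∑ _i : Fin n, (l - l * Real.log l) ≤ ∑ i, (μ i - l * Real.log (μ i)) :=
    Finset.sum_le_sum fun i _ => wishart_scalar_ineq hl (hμpos i)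
  have hconst : ∑ _i : Fin n, (l - l * Real.log l) = n * (l - l * Real.log l) := by
    rw [Finset.sum_const]
    simp [nsmul_eq_mul]
  have hRHSsum : ∑ i, (μ i - l * Real.log (μ i))
      = (V * S).trace - l * ((∑ i, Real.log (μ i))) := by
    rw [← htr, htr_eig, Finset.sum_sub_distrib, ← Finset.mul_sum]
  -- main inequality
  have hineq : (l • S⁻¹ * S).trace - l * Real.log (l • S⁻¹).det ≤
      (V * S).trace - l * Real.log V.det := by
    rw [htr_min, hlog_min, hlogV]
    have h1 : (n : ℝ) * (l - l * Real.log l) ≤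
        (V * S).trace - l * (∑ i, Real.log (μ i)) := by
      rw [← hconst, ← hRHSsum]; exact hsum_le
    nlinarith [h1]
  refine ⟨hineq, ?_, ?_⟩
  · -- equality implies V = l • S⁻¹
    intro heq
    have hsum_eq : ∑ i, (μ i - l * Real.log (μ i)) = ∑ _i : Fin n, (l - l * Real.log l) := by
      rw [hRHSsum, hconst, hlogV] at *
      rw [htr_min, hlog_min] at heq
      nlinarith [heq]
    have hall : ∀ i ∈ Finset.univ, l - l * Real.log l = μ i - l * Real.log (μ i) := by
      intro i hi
      have := (Finset.sum_eq_sum_iff_of_le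
        (fun i _ => wishart_scalar_ineq hl (hμpos i))).mp hsum_eq.symm
      exact (this i hi).symm ▸ rfl
    have hμl : ∀ i, μ i = l := fun i =>
      wishart_scalar_eq hl (hμpos i) (hall i (Finset.mem_univ i))
    have hAl : A = l • (1 : Matrix (Fin n) (Fin n) ℝ) := by
      have hdiag : Matrix.diagonal (RCLike.ofReal ∘ μ) = l • (1 : Matrix (Fin n) (Fin n) ℝ) := by
        have : (RCLike.ofReal ∘ μ : Fin n → ℝ) = fun _ => l := by
          funext i; simp [hμl i]
        rw [this]
        ext i j
        by_cases hij : i = j <;> simp [Matrix.diagonal_apply, Matrix.one_apply, hij]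
      calc A = (hAH.eigenvectorUnitary : Matrix (Fin n) (Fin n) ℝ) *
            Matrix.diagonal (RCLike.ofReal ∘ μ) *
            (star (hAH.eigenvectorUnitary : Matrix (Fin n) (Fin n) ℝ)) := by
            nth_rewrite 1 [hAH.spectral_theorem]; rw [Unitary.conjStarAlgAut_apply]
        _ = l • ((hAH.eigenvectorUnitary : Matrix (Fin n) (Fin n) ℝ) *
            (star (hAH.eigenvectorUnitary : Matrix (Fin n) (Fin n) ℝ))) := by
            rw [hdiag]; rw [mul_smul_comm, smul_mul_assoc, mul_one]
        _ = l • (1 : Matrix (Fin n) (Fin n) ℝ) := by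
            rw [Matrix.mem_unitaryGroup_iff.mp (hAH.eigenvectorUnitary).2]
    -- recover V
    have hVA : V = R⁻¹ * A * R⁻¹ := by
      rw [hAdef, ← mul_assoc, ← mul_assoc, Matrix.nonsing_inv_mul R hdetR.isUnit, one_mul,
        mul_assoc, Matrix.mul_nonsing_inv R hdetR.isUnit, mul_one]
    rw [hVA, hAl, mul_smul_comm, smul_mul_assoc, mul_one, ← Matrix.mul_inv_rev, hRR]
  · -- V = l • S⁻¹ implies equality
    intro h
    rw [h]
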